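/- The graph scattering transform is permutation covariant: for every N×N permutation matrix P, every path p ∈ 𝒫_J and every f ∈ ℂ^N, S[PG][p](P f) = P (S[G][p] f). -/

import Mathlib

open scoped BigOperators

noncomputable section

/-- Signals on a graph with `N` vertices. -/
abbrev GV (N : ℕ) := EuclideanSpace ℂ (Fin N)

/-- Entrywise absolute value (modulus) of a signal. -/
def absVec {N : ℕ} (f : GV N) : GV N := WithLp.toLp 2 (fun n => (‖f n‖ : ℂ))

/-- The low-pass wavelet operator `Q_J f = ∑ l, φ̂(2^J λ_l) (u_l^* f) u_l`. -/
def Qlow {N : ℕ} (J : ℤ) (phiHat : ℝ → ℂ) (lam : Fin N → ℝ) (u : Fin N → GV N)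
    (f : GV N) : GV N :=
  ∑ l, (phiHat ((2:ℝ) ^ J * lam l) * (inner ℂ (u l) f : ℂ)) • u l

/-- The band-pass wavelet operator `Q_j f = ∑ l, ψ̂(2^{-j} λ_l) (u_l^* f) u_l`. -/
def Qband {N : ℕ} (psiHat : ℝ → ℂ) (lam : Fin N → ℝ) (u : Fin N → GV N) (j : ℤ)
    (f : GV N) : GV N :=
  ∑ l, (psiHat ((2:ℝ) ^ (-j) * lam l) * (inner ℂ (u l) f : ℂ)) • u l

/-- Admissible scales: integers `j > -J`. -/
abbrev Scale (J : ℤ) := {j : ℤ // -J < j}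

/-- The scattering propagator `U[p] = U[j_m] ∘ ⋯ ∘ U[j₁]` along a path `p = (j₁, …, j_m)`,
where `U[j] f = |Q_j f|` entrywise; `U[∅] f = f`. -/
def Uprop {N : ℕ} {J : ℤ} (psiHat : ℝ → ℂ) (lam : Fin N → ℝ) (u : Fin N → GV N)
    (p : List (Scale J)) (f : GV N) : GV N :=
  p.foldl (fun g j => absVec (Qband psiHat lam u j.1 g)) f

/-- The windowed scattering transform `S[p] f = Q_J (U[p] f)`. -/
def Sop {N : ℕ} (J : ℤ) (phiHat psiHat : ℝ → ℂ) (lam : Fin N → ℝ) (u : Fin N → GV N)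
    (p : List (Scale J)) (f : GV N) : GV N :=
  Qlow J phiHat lam u (Uprop psiHat lam u p f)

/-- Action of the `N×N` permutation matrix `P` associated with `σ` on a signal:
`(P f)(n) = f(σ⁻¹ n)`. -/
def permVec {N : ℕ} (σ : Equiv.Perm (Fin N)) (f : GV N) : GV N := WithLp.toLp 2 (fun n => f (σ⁻¹ n))


lemma perm_inner {N : ℕ} (σ : Equiv.Perm (Fin N)) (v f : GV N) :
    (inner ℂ (permVec σ v) (permVec σ f) : ℂ) = inner ℂ v f := by
  simp only [PiLp.inner_apply, permVec]
  exact Equiv.sum_comp σ⁻¹ (fun i => inner ℂ (v i) (f i))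

lemma perm_smul {N : ℕ} (σ : Equiv.Perm (Fin N)) (c : ℂ) (v : GV N) :
    permVec σ (c • v) = c • permVec σ v := by
  ext n
  simp [permVec]

lemma perm_sum {N : ℕ} (σ : Equiv.Perm (Fin N)) (g : Fin N → GV N) :
    permVec σ (∑ l, g l) = ∑ l, permVec σ (g l) := by
  ext n
  simp [permVec, WithLp.ofLp_sum, Finset.sum_apply]

lemma perm_absVec {N : ℕ} (σ : Equiv.Perm (Fin N)) (v : GV N) :
    absVec (permVec σ v) = permVec σ (absVec v) := by
  ext n
  simp [absVec, permVec]

lemma perm_Qlow {N : ℕ} (J : ℤ) (phiHat : ℝ → ℂ) (lam : Fin N → ℝ) (u : Fin N → GV N)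
    (σ : Equiv.Perm (Fin N)) (f : GV N) :
    Qlow J phiHat lam (fun l => permVec σ (u l)) (permVec σ f)
      = permVec σ (Qlow J phiHat lam u f) := by
  unfold Qlow
  rw [perm_sum]
  exact Finset.sum_congr rfl fun l _ => by rw [perm_inner, perm_smul]

lemma perm_Qband {N : ℕ} (psiHat : ℝ → ℂ) (lam : Fin N → ℝ) (u : Fin N → GV N) (j : ℤ)
    (σ : Equiv.Perm (Fin N)) (f : GV N) :
    Qband psiHat lam (fun l => permVec σ (u l)) j (permVec σ f)
      = permVec σ (Qband psiHat lam u j f) := by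
  unfold Qband
  rw [perm_sum]
  exact Finset.sum_congr rfl fun l _ => by rw [perm_inner, perm_smul]

lemma perm_Uprop {N : ℕ} {J : ℤ} (psiHat : ℝ → ℂ) (lam : Fin N → ℝ) (u : Fin N → GV N)
    (σ : Equiv.Perm (Fin N)) (p : List (Scale J)) (f : GV N) :
    Uprop psiHat lam (fun l => permVec σ (u l)) p (permVec σ f)
      = permVec σ (Uprop psiHat lam u p f) := by
  induction p generalizing f with
  | nil => rfl
  | cons j t ih =>
    show Uprop psiHat lam _ t (absVec (Qband psiHat lam _ j.1 (permVec σ f))) = _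
    rw [perm_Qband, perm_absVec, ih]
    rfl

/-- permutation covariance of the scattering transform:
`S[PG][p](Pf) = P (S[G][p] f)` for every path `p`. -/
theorem scattering_permutation_covariance
    (N : ℕ) (hN : 2 ≤ N)
    (J : ℤ) (phiHat psiHat : ℝ → ℂ)
    (lam : Fin N → ℝ) (u : Fin N → GV N) (α : ℂ)
    -- orthonormal eigenbasis of the graph Laplacian
    (hu : Orthonormal ℂ u)
    -- eigenvalues `0 = λ₀ < λ₁ ≤ ⋯ ≤ λ_{N-1}`
    (hlam0 : lam ⟨0, by omega⟩ = 0)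
    (hmono : Monotone lam)
    (hlam1 : 0 < lam ⟨1, by omega⟩)
    -- `u₀ = α (1,…,1)ᵀ/√N` with `|α| = 1`
    (hα : ‖α‖ = 1)
    (hu0 : ∀ n, u ⟨0, by omega⟩ n = α / (Real.sqrt N : ℂ))
    -- Littlewood–Paley condition
    (hLP : ∀ t : ℝ, 0 ≤ t →
      ‖phiHat ((2:ℝ) ^ J * t)‖ ^ 2
        + ∑' j : Scale J, ‖psiHat ((2:ℝ) ^ (-j.1) * t)‖ ^ 2 = 1)
    (σ : Equiv.Perm (Fin N)) (p : List (Scale J)) (f : GV N) :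
    Sop J phiHat psiHat lam (fun l => permVec σ (u l)) p (permVec σ f)
      = permVec σ (Sop J phiHat psiHat lam u p f) := by
  unfold Sop
  rw [perm_Uprop, perm_Qlow]

end
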